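/- tan(π/9) + 2·sin(π/9) − 2·sin(2π/9) + 2·sin(4π/9) = √3. -/

import Mathlib

theorem stmt15 : Real.tan (Real.pi/9) + 2*Real.sin (Real.pi/9) - 2*Real.sin (2*Real.pi/9) + 2*Real.sin (4*Real.pi/9) = Real.sqrt 3 := by
  have hpi := Real.pi_pos
  have hc : Real.cos (Real.pi/9) > 0 := by
    apply Real.cos_pos_of_mem_Ioo
    constructor <;> nlinarith
  have h1 : Real.sin (2*Real.pi/9) = Real.sqrt 3/2 * Real.cos (Real.pi/9) - 1/2 * Real.sin (Real.pi/9) := by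
    have : 2*Real.pi/9 = Real.pi/3 - Real.pi/9 := by ring
    rw [this, Real.sin_sub, Real.sin_pi_div_three, Real.cos_pi_div_three]
  have h2 : Real.sin (4*Real.pi/9) = Real.sqrt 3/2 * Real.cos (Real.pi/9) + 1/2 * Real.sin (Real.pi/9) := by
    have : 4*Real.pi/9 = Real.pi/3 + Real.pi/9 := by ring
    rw [this, Real.sin_add, Real.sin_pi_div_three, Real.cos_pi_div_three]
  have h3 : Real.sin (2*Real.pi/9) = 2 * Real.sin (Real.pi/9) * Real.cos (Real.pi/9) := by
    have : 2*Real.pi/9 = 2*(Real.pi/9) := by ring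
    rw [this, Real.sin_two_mul]
  rw [Real.tan_eq_sin_div_cos]
  field_simp
  rw [show Real.pi * 2 / 9 = 2*Real.pi/9 by ring, show Real.pi * 4 / 9 = 4*Real.pi/9 by ring]
  nlinarith [h1, h2, h3, hc]
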